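/- Let f : X → X be a continuous map of a compact metric space, S a closed subset with f^{-1}(S) ⊆ S, and suppose f has shadowing on B_b(S) for some b > 0. If x ∈ S, y ∈ X \ S and y → x, then x ∈ ∂S. -/
import Mathlib


open Metric Filter Topology Set

variable {X : Type*}

/-- `(c i)_{i=0}^k` is a `δ`-chain of `f` (up to index `k`). -/
def IsDeltaChain [MetricSpace X] (f : X → X) (δ : ℝ) (k : ℕ) (c : ℕ → X) : Prop :=
  ∀ i < k, dist (f (c i)) (c (i + 1)) ≤ δ

/-- `x → y` : for every `δ > 0` there is a `δ`-chain from `x` to `y`. -/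
def ChainReach [MetricSpace X] (f : X → X) (x y : X) : Prop :=
  ∀ δ > 0, ∃ k ≥ 1, ∃ c : ℕ → X, c 0 = x ∧ c k = y ∧ IsDeltaChain f δ k c

/-- The chain recurrent set. -/
def ChainRec [MetricSpace X] (f : X → X) : Set X := {x | ChainReach f x x}

/-- `C` is a chain component of `f`. -/
def IsChainComponent [MetricSpace X] (f : X → X) (C : Set X) : Prop :=
  ∃ x, ChainReach f x x ∧
    C = {y | ChainReach f y y ∧ ChainReach f x y ∧ ChainReach f y x}

/-- A set is chain stable iff points chain-reachable from it stay in it. -/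
def ChainStable [MetricSpace X] (f : X → X) (S : Set X) : Prop :=
  ∀ x ∈ S, ∀ y, ChainReach f x y → y ∈ S

/-- `S` is "initially stable": if `y → x` with `x ∈ S` then `y ∈ S`. -/
def InitialStable [MetricSpace X] (f : X → X) (S : Set X) : Prop :=
  ∀ x ∈ S, ∀ y, ChainReach f y x → y ∈ S

/-- `f` restricted to `Λ` is chain transitive. -/
def ChainTransitiveOn [MetricSpace X] (f : X → X) (Λ : Set X) : Prop :=
  ∀ p ∈ Λ, ∀ q ∈ Λ, ∀ δ > 0, ∃ k ≥ 1, ∃ c : ℕ → X,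
    c 0 = p ∧ c k = q ∧ (∀ i ≤ k, c i ∈ Λ) ∧ IsDeltaChain f δ k c

/-- `f` has shadowing on `S`. -/
def ShadowsOn [MetricSpace X] (f : X → X) (S : Set X) : Prop :=
  ∀ ε > 0, ∃ δ > 0, ∀ (k : ℕ) (c : ℕ → X), (∀ i ≤ k, c i ∈ S) →
    IsDeltaChain f δ k c → ∃ x, ∀ i ≤ k, dist (c i) (f^[i] x) ≤ ε

/-- Iterate of a homeomorphism indexed by `ℤ`. -/
def hIter [TopologicalSpace X] (f : X ≃ₜ X) (i : ℤ) : X → X :=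
  if 0 ≤ i then (⇑f)^[i.toNat] else (⇑f.symm)^[(-i).toNat]

/-- A `δ`-limit-pseudo orbit of the homeomorphism `f`. -/
def IsLimitPseudoOrbit [MetricSpace X] (f : X ≃ₜ X) (δ : ℝ) (ξ : ℤ → X) : Prop :=
  (∀ i : ℤ, dist (f (ξ i)) (ξ (i + 1)) ≤ δ) ∧
  Tendsto (fun i : ℤ => dist (f (ξ i)) (ξ (i + 1))) atBot (nhds 0) ∧
  Tendsto (fun i : ℤ => dist (f (ξ i)) (ξ (i + 1))) atTop (nhds 0)

/-- `f` has L-shadowing on `S`. -/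
def LShadowsOn [MetricSpace X] (f : X ≃ₜ X) (S : Set X) : Prop :=
  ∀ ε > 0, ∃ δ > 0, ∀ ξ : ℤ → X, (∀ i : ℤ, ξ i ∈ S) →
    IsLimitPseudoOrbit f δ ξ →
    ∃ x : X, (∀ i : ℤ, dist (ξ i) (hIter f i x) ≤ ε) ∧
      Tendsto (fun i : ℤ => dist (ξ i) (hIter f i x)) atBot (nhds 0) ∧
      Tendsto (fun i : ℤ => dist (ξ i) (hIter f i x)) atTop (nhds 0)

/-- `f` is expansive on `S`. -/
def ExpansiveOn [MetricSpace X] (f : X ≃ₜ X) (S : Set X) : Prop :=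
  ∃ e > 0, ∀ x y : X, (∀ i : ℤ, hIter f i x ∈ S) → (∀ i : ℤ, hIter f i y ∈ S) →
    (∀ i : ℤ, dist (hIter f i x) (hIter f i y) ≤ e) → x = y

/-- Closed `b`-neighborhood of `S`. -/
def Nbhd [MetricSpace X] (b : ℝ) (S : Set X) : Set X := {x | Metric.infDist x S ≤ b}

/-- Attractor for a continuous map `f`. -/
def IsAttractor [TopologicalSpace X] (f : X → X) (Λ : Set X) : Prop :=
  IsClosed Λ ∧ f '' Λ = Λ ∧
    ∃ U : Set X, IsOpen U ∧ f '' closure U ⊆ U ∧ Λ = ⋂ i : ℕ, f^[i] '' U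

/-- `f` is (topologically) mixing. -/
def IsMixing [TopologicalSpace X] (f : X → X) : Prop :=
  ∀ U V : Set X, IsOpen U → IsOpen V → U.Nonempty → V.Nonempty →
    ∃ j : ℕ, ∀ i ≥ j, (f^[i] '' U ∩ V).Nonempty

/-- The ω-limit set of `x` under `f`. -/
def OmegaSet [TopologicalSpace X] (f : X → X) (x : X) : Set X :=
  {y | ∃ φ : ℕ → ℕ, StrictMono φ ∧ Tendsto (fun j => f^[φ j] x) atTop (nhds y)}

/-- `M` is a minimal set for `f`. -/
def IsMinimalSet [TopologicalSpace X] (f : X → X) (M : Set X) : Prop :=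
  M.Nonempty ∧ IsClosed M ∧ f '' M ⊆ M ∧ ∀ x ∈ M, OmegaSet f x = M


lemma rev_modulus {X : Type*} [MetricSpace X] [CompactSpace X] (f : X → X) (hf : Continuous f)
    (S : Set X) (hS : IsClosed S) (hSne : S.Nonempty) (hinv : f ⁻¹' S ⊆ S) (b : ℝ) (hb : 0 < b) :
    ∃ θ > 0, ∀ p, infDist (f p) S ≤ θ → infDist p S ≤ b := by
  set K : Set X := {p | b ≤ infDist p S} with hK
  have hKclosed : IsClosed K := isClosed_le continuous_const (continuous_infDist_pt S)
  rcases K.eq_empty_or_nonempty with hKe | hKne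
  · exact ⟨1, one_pos, fun p _ => by
      by_contra h
      exact (hKe ▸ (le_of_lt (lt_of_not_ge h) : b ≤ infDist p S) : p ∈ (∅ : Set X))⟩
  · obtain ⟨p₀, hp₀K, hmin⟩ := hKclosed.isCompact.exists_isMinOn hKne
      ((continuous_infDist_pt S).comp hf).continuousOn
    have hp₀ : p₀ ∉ S := by
      intro h
      have := infDist_zero_of_mem h
      have : b ≤ (0:ℝ) := by rw [← this]; exact hp₀K
      linarith
    have hfp₀ : f p₀ ∉ S := fun h => hp₀ (hinv h)
    have hpos : 0 < infDist (f p₀) S := (hS.notMem_iff_infDist_pos hSne).1 hfp₀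
    refine ⟨infDist (f p₀) S / 2, by linarith, fun p hp => ?_⟩
    by_contra h
    have hpK : p ∈ K := le_of_lt (lt_of_not_ge h)
    have : infDist (f p₀) S ≤ infDist (f p) S := hmin hpK
    linarith

theorem stmt4 [MetricSpace X] [CompactSpace X] (f : X → X) (hf : Continuous f)
    (S : Set X) (hS : IsClosed S) (hinv : f ⁻¹' S ⊆ S)
    (b : ℝ) (hb : 0 < b) (hsh : ShadowsOn f (Nbhd b S))
    (x y : X) (hx : x ∈ S) (hy : y ∉ S) (hxy : ChainReach f y x) :
    x ∈ frontier S := by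
  have hSne : S.Nonempty := ⟨x, hx⟩
  rw [hS.frontier_eq]
  refine ⟨hx, fun hxint => ?_⟩
  obtain ⟨r, hr, hball⟩ := Metric.isOpen_iff.1 isOpen_interior x hxint
  have hballS : ball x r ⊆ S := fun z hz => interior_subset (hball hz)
  have hα : 0 < infDist y S := (hS.notMem_iff_infDist_pos hSne).1 hy
  obtain ⟨θ, hθ, hθprop⟩ := rev_modulus f hf S hS hSne hinv b hb
  set ε : ℝ := min (min (infDist y S / 2) (r / 2)) (min b (θ / 2)) with hεdef
  have hε : 0 < ε :=
    lt_min (lt_min (by linarith) (by linarith)) (lt_min hb (by linarith))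
  have hεα : ε < infDist y S :=
    lt_of_le_of_lt (le_trans (min_le_left _ _) (min_le_left _ _)) (by linarith)
  have hεr : ε < r :=
    lt_of_le_of_lt (le_trans (min_le_left _ _) (min_le_right _ _)) (by linarith)
  have hεb : ε ≤ b := le_trans (min_le_right _ _) (min_le_left _ _)
  have hεθ : ε ≤ θ / 2 := le_trans (min_le_right _ _) (min_le_right _ _)
  obtain ⟨δ₁, hδ₁, Hsh⟩ := hsh ε hε
  set δ : ℝ := min δ₁ (θ / 2) with hδdef
  have hδ : 0 < δ := lt_min hδ₁ (by linarith)
  have hδθ : δ ≤ θ / 2 := min_le_right _ _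
  have hδδ₁ : δ ≤ δ₁ := min_le_left _ _
  obtain ⟨k, hk1, c, hc0, hck, hchain⟩ := hxy δ hδ
  have backinv : ∀ m z, f^[m] z ∈ S → z ∈ S := by
    intro m
    induction m with
    | zero => intro z hz; exact hz
    | succ n ih =>
      intro z hz
      rw [Function.iterate_succ_apply] at hz
      exact hinv (ih (f z) hz)
  have key : ∀ m i, i ≤ k → k ≤ i + m → infDist (c i) S ≤ ε := by
    intro m
    induction m with
    | zero =>
      intro i h1 h2
      have hik : i = k := by omega
      rw [hik, hck, infDist_zero_of_mem hx]
      exact le_of_lt hε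
    | succ n ih =>
      intro i h1 h2
      by_cases hcase : k ≤ i + n
      · exact ih i h1 hcase
      · have hik : i < k := by omega
        have hnext : infDist (c (i + 1)) S ≤ ε := ih (i + 1) (by omega) (by omega)
        have h3 : infDist (f (c i)) S ≤ ε + δ :=
          calc infDist (f (c i)) S
              ≤ infDist (c (i + 1)) S + dist (f (c i)) (c (i + 1)) :=
                infDist_le_infDist_add_dist
            _ ≤ ε + δ := add_le_add hnext (hchain i hik)
        have hib : infDist (c i) S ≤ b := hθprop _ (by linarith)
        have hmem : ∀ j ≤ k - i, c (i + j) ∈ Nbhd b S := by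
          intro j hj
          rcases Nat.eq_zero_or_pos j with h0 | hpos'
          · subst h0; exact hib
          · exact le_trans (ih (i + j) (by omega) (by omega)) hεb
        have hchain' : IsDeltaChain f δ₁ (k - i) (fun j => c (i + j)) := by
          intro j hj
          exact le_trans (hchain (i + j) (by omega)) hδδ₁
        obtain ⟨z, hz⟩ := Hsh (k - i) (fun j => c (i + j)) hmem hchain'
        have hz0 : dist (c i) z ≤ ε := by simpa using hz 0 (Nat.zero_le _)
        have hzk : dist (c k) (f^[k - i] z) ≤ ε := by
          have := hz (k - i) le_rfl
          rwa [show i + (k - i) = k by omega] at this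
        have hzS : z ∈ S := by
          apply backinv (k - i)
          apply hballS
          rw [mem_ball, dist_comm]
          rw [hck] at hzk
          exact lt_of_le_of_lt hzk hεr
        exact le_trans (infDist_le_dist_of_mem hzS) hz0
  have hfin : infDist (c 0) S ≤ ε := key k 0 (Nat.zero_le _) (by omega)
  rw [hc0] at hfin
  linarith
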